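/- arXiv:1303.3173 — 2 statements merged into one kernel-verified Lean document; each statement's English description precedes it below -/
import Mathlib

section
/- Let R be a commutative local ring and s ∈ R. Then every upper triangular matrix [[a,b],[0,c]] in K_s(R) is quasipolar in K_s(R). -/
/-- The generalized matrix ring `K_s(R)` with multiplier `s`. -/
@[ext]
structure GenMatrix (R : Type*) (s : R) where
  a : R
  b : R
  c : R
  d : R

namespace GenMatrix

variable {R : Type*} [Ring R] {s : R}

instance : Add (GenMatrix R s) :=
  ⟨fun X Y => ⟨X.a + Y.a, X.b + Y.b, X.c + Y.c, X.d + Y.d⟩⟩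
instance : Neg (GenMatrix R s) := ⟨fun X => ⟨-X.a, -X.b, -X.c, -X.d⟩⟩
instance : Zero (GenMatrix R s) := ⟨⟨0, 0, 0, 0⟩⟩
instance : One (GenMatrix R s) := ⟨⟨1, 0, 0, 1⟩⟩
instance : Mul (GenMatrix R s) :=
  ⟨fun X Y => ⟨X.a * Y.a + s * (X.b * Y.c), X.a * Y.b + X.b * Y.d,
    X.c * Y.a + X.d * Y.c, s * (X.c * Y.b) + X.d * Y.d⟩⟩

@[simp] lemma add_a (X Y : GenMatrix R s) : (X + Y).a = X.a + Y.a := rfl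
@[simp] lemma add_b (X Y : GenMatrix R s) : (X + Y).b = X.b + Y.b := rfl
@[simp] lemma add_c (X Y : GenMatrix R s) : (X + Y).c = X.c + Y.c := rfl
@[simp] lemma add_d (X Y : GenMatrix R s) : (X + Y).d = X.d + Y.d := rfl
@[simp] lemma neg_a (X : GenMatrix R s) : (-X).a = -X.a := rfl
@[simp] lemma neg_b (X : GenMatrix R s) : (-X).b = -X.b := rfl
@[simp] lemma neg_c (X : GenMatrix R s) : (-X).c = -X.c := rfl
@[simp] lemma neg_d (X : GenMatrix R s) : (-X).d = -X.d := rfl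
@[simp] lemma zero_a : (0 : GenMatrix R s).a = 0 := rfl
@[simp] lemma zero_b : (0 : GenMatrix R s).b = 0 := rfl
@[simp] lemma zero_c : (0 : GenMatrix R s).c = 0 := rfl
@[simp] lemma zero_d : (0 : GenMatrix R s).d = 0 := rfl
@[simp] lemma one_a : (1 : GenMatrix R s).a = 1 := rfl
@[simp] lemma one_b : (1 : GenMatrix R s).b = 0 := rfl
@[simp] lemma one_c : (1 : GenMatrix R s).c = 0 := rfl
@[simp] lemma one_d : (1 : GenMatrix R s).d = 1 := rfl
@[simp] lemma mul_a (X Y : GenMatrix R s) : (X * Y).a = X.a * Y.a + s * (X.b * Y.c) := rfl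
@[simp] lemma mul_b (X Y : GenMatrix R s) : (X * Y).b = X.a * Y.b + X.b * Y.d := rfl
@[simp] lemma mul_c (X Y : GenMatrix R s) : (X * Y).c = X.c * Y.a + X.d * Y.c := rfl
@[simp] lemma mul_d (X Y : GenMatrix R s) : (X * Y).d = s * (X.c * Y.b) + X.d * Y.d := rfl

instance : AddCommGroup (GenMatrix R s) where
  add_assoc X Y Z := by ext <;> simp [add_assoc]
  zero_add X := by ext <;> simp
  add_zero X := by ext <;> simp
  add_comm X Y := by ext <;> simp [add_comm]
  neg_add_cancel X := by ext <;> simp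
  nsmul := nsmulRec
  zsmul := zsmulRec

section Central

variable [Fact (s ∈ Set.center R)]

lemma scomm (r : R) : r * s = s * r := Semigroup.mem_center_iff.mp Fact.out r

lemma sshift (r t : R) : r * (s * t) = s * (r * t) := by
  rw [← mul_assoc, scomm (s := s), mul_assoc]

instance : Ring (GenMatrix R s) where
  __ := (inferInstance : AddCommGroup (GenMatrix R s))
  left_distrib X Y Z := by ext <;> simp [mul_add, add_mul] <;> abel
  right_distrib X Y Z := by ext <;> simp [mul_add, add_mul] <;> abel
  zero_mul X := by ext <;> simp
  mul_zero X := by ext <;> simp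
  mul_assoc X Y Z := by
    ext <;> simp only [mul_a, mul_b, mul_c, mul_d, mul_add, add_mul, mul_assoc, sshift] <;> abel
  one_mul X := by ext <;> simp
  mul_one X := by ext <;> simp

end Central

instance central_of_comm {R : Type*} [CommRing R] (s : R) : Fact (s ∈ Set.center R) :=
  ⟨by rw [Set.center_eq_univ]; trivial⟩

/-- `det_s` of a generalized matrix over a commutative ring. -/
def dets {R : Type*} {s : R} [CommRing R] (A : GenMatrix R s) : R :=
  A.a * A.d - s * (A.b * A.c)

/-- The trace of a generalized matrix. -/
def tr {R : Type*} {s : R} [Ring R] (A : GenMatrix R s) : R := A.a + A.d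

end GenMatrix

/-- An element `a` is quasinilpotent if `1 + a*x` is a unit for every `x` commuting with `a`. -/
def IsQuasinilpotent {R : Type*} [Ring R] (a : R) : Prop :=
  ∀ x : R, a * x = x * a → IsUnit (1 + a * x)

/-- An element `a` is quasipolar if there is an idempotent `p` in the double commutant of `a`
with `a + p` a unit and `a * p` quasinilpotent. -/
def IsQuasipolar {R : Type*} [Ring R] (a : R) : Prop :=
  ∃ p : R, IsIdempotentElem p ∧ (∀ y : R, y * a = a * y → p * y = y * p) ∧
    IsUnit (a + p) ∧ IsQuasinilpotent (a * p)

/-- A ring is quasipolar if every element is quasipolar. -/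
def IsQuasipolarRing (R : Type*) [Ring R] : Prop := ∀ a : R, IsQuasipolar a

/-- An element is strongly clean if it is the sum of an idempotent and a unit that commute. -/
def IsStronglyClean {R : Type*} [Ring R] (a : R) : Prop :=
  ∃ e u : R, IsIdempotentElem e ∧ IsUnit u ∧ a = e + u ∧ e * u = u * e

/-- A ring is strongly clean if every element is strongly clean. -/
def IsStronglyCleanRing (R : Type*) [Ring R] : Prop := ∀ a : R, IsStronglyClean a

/-- `a` is similar to `b` if `b = u⁻¹ * a * u` for some unit `u`. -/
def IsSimilar {R : Type*} [Ring R] (a b : R) : Prop :=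
  ∃ u : Rˣ, b = ↑u⁻¹ * a * ↑u

/-- The Jacobson radical of a ring: the intersection of all maximal left ideals. -/
def JacobsonRadical (R : Type*) [Ring R] : Ideal R := Ideal.jacobson ⊥


section Aux

variable {R : Type*} [CommRing R] {s : R}

/-- If the determinant `dets X` is a unit, then `X` is a unit of `K_s(R)`. -/
lemma isUnit_of_dets_isUnit (X : GenMatrix R s) (h : IsUnit (GenMatrix.dets X)) :
    IsUnit X := by
  obtain ⟨v, hv⟩ := h.exists_left_inv
  refine isUnit_iff_exists.mpr ⟨⟨v * X.d, -(v * X.b), -(v * X.c), v * X.a⟩, ?_, ?_⟩ <;>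
    · ext <;> simp only [GenMatrix.mul_a, GenMatrix.mul_b, GenMatrix.mul_c, GenMatrix.mul_d,
        GenMatrix.one_a, GenMatrix.one_b, GenMatrix.one_c, GenMatrix.one_d] <;>
      · simp only [GenMatrix.dets] at hv
        first
        | linear_combination hv
        | ring1

variable [IsLocalRing R]

lemma isUnit_add_nonunit {u x : R} (hu : IsUnit u) (hx : ¬IsUnit x) : IsUnit (u + x) := by
  by_contra h
  exact absurd hu (by simpa using
    IsLocalRing.nonunits_add h (show -x ∈ nonunits R by simpa using hx))

lemma isUnit_one_add_nonunit {x : R} (hx : ¬IsUnit x) : IsUnit (1 + x) :=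
  isUnit_add_nonunit isUnit_one hx

/-- An upper triangular generalized matrix whose diagonal entries are nonunits is
quasinilpotent. -/
lemma genMatrix_quasinil_aux {a b c : R} (ha : ¬IsUnit a) (hc : ¬IsUnit c) :
    IsQuasinilpotent (⟨a, b, 0, c⟩ : GenMatrix R s) := by
  intro Y hY
  have hE1 : a * Y.a + s * (b * Y.c) = Y.a * a + s * (Y.b * 0) := congrArg GenMatrix.a hY
  apply isUnit_of_dets_isUnit
  have key : GenMatrix.dets (1 + (⟨a, b, 0, c⟩ : GenMatrix R s) * Y) =
      1 + (a * (Y.a * (1 + c * Y.d)) +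
        c * (Y.d - s * ((a * Y.b + b * Y.d) * Y.c))) := by
    simp only [GenMatrix.dets, GenMatrix.add_a, GenMatrix.add_b, GenMatrix.add_c,
      GenMatrix.add_d, GenMatrix.mul_a, GenMatrix.mul_b, GenMatrix.mul_c, GenMatrix.mul_d,
      GenMatrix.one_a, GenMatrix.one_b, GenMatrix.one_c, GenMatrix.one_d]
    linear_combination (1 + c * Y.d) * hE1
  rw [key]
  apply isUnit_one_add_nonunit
  intro hu
  rcases IsLocalRing.isUnit_or_isUnit_of_isUnit_add hu with h | h
  · exact ha (isUnit_of_mul_isUnit_left h)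
  · exact hc (isUnit_of_mul_isUnit_left h)

end Aux

/-- over a commutative local ring `R`, every upper triangular matrix
`[[a,b],[0,c]]` of `K_s(R)` is quasipolar. -/
theorem genMatrix_upperTriangular_isQuasipolar {R : Type*} [CommRing R] [IsLocalRing R]
    (s a b c : R) :
    IsQuasipolar (⟨a, b, 0, c⟩ : GenMatrix R s) := by
  set A : GenMatrix R s := ⟨a, b, 0, c⟩ with hA
  by_cases ha : IsUnit a <;> by_cases hc : IsUnit c
  · -- both diagonal entries units: take p = 0
    refine ⟨0, IsIdempotentElem.zero, fun y _ => by rw [zero_mul, mul_zero], ?_, ?_⟩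
    · rw [add_zero]
      exact isUnit_of_dets_isUnit _ (by simp [GenMatrix.dets, hA, ha.mul hc])
    · rw [mul_zero]
      intro x _
      rw [zero_mul, add_zero]
      exact isUnit_one
  · -- a unit, c nonunit: p = [[0, x],[0, 1]] with x = -(v*b), v = (a-c)⁻¹
    have hac : IsUnit (a - c) := by
      rw [show a - c = a + -c by ring]
      exact isUnit_add_nonunit ha (by simpa using hc)
    obtain ⟨v, hv⟩ := hac.exists_left_inv
    refine ⟨⟨0, -(v * b), 0, 1⟩, ?_, ?_, ?_, ?_⟩
    · unfold IsIdempotentElem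
      ext <;> simp
    · intro y hy
      have hE2 : y.a * b + y.b * c = a * y.b + b * y.d := by
        have := congrArg GenMatrix.b hy; simpa [hA] using this
      have hE3 : y.c * a = c * y.c := by
        have := congrArg GenMatrix.c hy; simpa [hA] using this
      have hr : y.c = 0 := by
        have : y.c * (a - c) * v = 0 := by linear_combination v * hE3
        calc y.c = y.c * (v * (a - c)) := by rw [hv, mul_one]
        _ = y.c * (a - c) * v := by ring
        _ = 0 := this
      ext <;> simp only [GenMatrix.mul_a, GenMatrix.mul_b, GenMatrix.mul_c, GenMatrix.mul_d, hr]
      · ring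
      · linear_combination v * hE2 + y.b * hv
      · ring
      · ring
    · apply isUnit_of_dets_isUnit
      have hc1 : IsUnit (c + 1) := by
        have := isUnit_add_nonunit (isUnit_one (M := R)) hc; simpa [add_comm] using this
      have hd : GenMatrix.dets (A + (⟨0, -(v * b), 0, 1⟩ : GenMatrix R s)) = a * (c + 1) := by
        simp only [GenMatrix.dets, hA, GenMatrix.add_a, GenMatrix.add_b, GenMatrix.add_c,
          GenMatrix.add_d]
        ring
      rw [hd]
      exact ha.mul hc1
    · have : A * (⟨0, -(v * b), 0, 1⟩ : GenMatrix R s) =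
          ⟨0, a * -(v * b) + b, 0, c⟩ := by
        ext <;> simp [hA]
      rw [this]
      exact genMatrix_quasinil_aux (by simp) hc
  · -- a nonunit, c unit: p = [[1, x],[0, 0]] with x = v*b, v = (a-c)⁻¹
    have hac : IsUnit (a - c) := by
      have h1 : IsUnit (c + -a) := isUnit_add_nonunit hc (by simpa using ha)
      rw [show a - c = -(c + -a) by ring]
      exact h1.neg
    obtain ⟨v, hv⟩ := hac.exists_left_inv
    refine ⟨⟨1, v * b, 0, 0⟩, ?_, ?_, ?_, ?_⟩
    · unfold IsIdempotentElem
      ext <;> simp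
    · intro y hy
      have hE2 : y.a * b + y.b * c = a * y.b + b * y.d := by
        have := congrArg GenMatrix.b hy; simpa [hA] using this
      have hE3 : y.c * a = c * y.c := by
        have := congrArg GenMatrix.c hy; simpa [hA] using this
      have hr : y.c = 0 := by
        have : y.c * (a - c) * v = 0 := by linear_combination v * hE3
        calc y.c = y.c * (v * (a - c)) := by rw [hv, mul_one]
        _ = y.c * (a - c) * v := by ring
        _ = 0 := this
      ext <;> simp only [GenMatrix.mul_a, GenMatrix.mul_b, GenMatrix.mul_c, GenMatrix.mul_d, hr]
      · ring
      · linear_combination (-v) * hE2 + (-(y.b)) * hv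
      · ring
      · ring
    · apply isUnit_of_dets_isUnit
      have ha1 : IsUnit (a + 1) := by
        have := isUnit_add_nonunit (isUnit_one (M := R)) ha; simpa [add_comm] using this
      have hd : GenMatrix.dets (A + (⟨1, v * b, 0, 0⟩ : GenMatrix R s)) = (a + 1) * c := by
        simp only [GenMatrix.dets, hA, GenMatrix.add_a, GenMatrix.add_b, GenMatrix.add_c,
          GenMatrix.add_d]
        ring
      rw [hd]
      exact ha1.mul hc
    · have : A * (⟨1, v * b, 0, 0⟩ : GenMatrix R s) =
          ⟨a, a * (v * b), 0, 0⟩ := by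
        ext <;> simp [hA]
      rw [this]
      exact genMatrix_quasinil_aux ha (by simp)
  · -- both nonunits: p = 1
    refine ⟨1, IsIdempotentElem.one, fun y _ => by rw [one_mul, mul_one], ?_, ?_⟩
    · apply isUnit_of_dets_isUnit
      have ha1 : IsUnit (a + 1) := by
        have := isUnit_add_nonunit (isUnit_one (M := R)) ha; simpa [add_comm] using this
      have hc1 : IsUnit (c + 1) := by
        have := isUnit_add_nonunit (isUnit_one (M := R)) hc; simpa [add_comm] using this
      have hd : GenMatrix.dets (A + (1 : GenMatrix R s)) = (a + 1) * (c + 1) := by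
        simp only [GenMatrix.dets, hA, GenMatrix.add_a, GenMatrix.add_b, GenMatrix.add_c,
          GenMatrix.add_d, GenMatrix.one_a, GenMatrix.one_b, GenMatrix.one_c, GenMatrix.one_d]
        ring
      rw [hd]
      exact ha1.mul hc1
    · rw [mul_one]
      exact genMatrix_quasinil_aux ha hc
end

section
/- Let R be a commutative local ring and s ∈ R. The ring K_s(R) is quasipolar if and only if for every A ∈ K_s(R) with det_s(A) ∈ J(R), either tr(A) ∈ J(R) or the equation x² − tr(A)x + det_s(A) = 0 has a solution in R. -/
section Aux

namespace GenMatrix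

variable {R : Type*} [CommRing R] {s : R}

/-- Scalar matrices. -/
def scalar (r : R) : GenMatrix R s := ⟨r, 0, 0, r⟩

@[simp] lemma scalar_a (r : R) : (scalar r : GenMatrix R s).a = r := rfl
@[simp] lemma scalar_b (r : R) : (scalar r : GenMatrix R s).b = 0 := rfl
@[simp] lemma scalar_c (r : R) : (scalar r : GenMatrix R s).c = 0 := rfl
@[simp] lemma scalar_d (r : R) : (scalar r : GenMatrix R s).d = r := rfl

@[simp] lemma sub_a (X Y : GenMatrix R s) : (X - Y).a = X.a - Y.a := by
  simp [sub_eq_add_neg]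
@[simp] lemma sub_b (X Y : GenMatrix R s) : (X - Y).b = X.b - Y.b := by
  simp [sub_eq_add_neg]
@[simp] lemma sub_c (X Y : GenMatrix R s) : (X - Y).c = X.c - Y.c := by
  simp [sub_eq_add_neg]
@[simp] lemma sub_d (X Y : GenMatrix R s) : (X - Y).d = X.d - Y.d := by
  simp [sub_eq_add_neg]

lemma scalar_mul_scalar (r r' : R) :
    (scalar r : GenMatrix R s) * scalar r' = scalar (r * r') := by
  ext <;> simp

lemma scalar_comm (r : R) (X : GenMatrix R s) : scalar r * X = X * scalar r := by
  ext <;> simp <;> ring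

lemma scalar_mul_scalar_mul (r r' : R) (X Y : GenMatrix R s) :
    (scalar r * X) * (scalar r' * Y) = scalar (r * r') * (X * Y) := by
  ext <;> simp <;> ring

lemma dets_mul (X Y : GenMatrix R s) : dets (X * Y) = dets X * dets Y := by
  simp only [dets, mul_a, mul_b, mul_c, mul_d]; ring

lemma dets_one : dets (1 : GenMatrix R s) = 1 := by simp [dets]

lemma dets_scalar (r : R) : dets (scalar r : GenMatrix R s) = r * r := by simp [dets]

lemma dets_one_add (X : GenMatrix R s) : dets (1 + X) = 1 + tr X + dets X := by
  simp only [dets, tr, add_a, add_b, add_c, add_d, one_a, one_b, one_c, one_d]; ring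

lemma dets_one_sub (X : GenMatrix R s) : dets (1 - X) = 1 - tr X + dets X := by
  simp only [dets, tr, sub_a, sub_b, sub_c, sub_d, one_a, one_b, one_c, one_d]; ring

lemma tr_scalar_mul (r : R) (X : GenMatrix R s) : tr (scalar r * X) = r * tr X := by
  simp only [tr, mul_a, mul_d, scalar_a, scalar_b, scalar_c, scalar_d]; ring

lemma tr_add (X Y : GenMatrix R s) : tr (X + Y) = tr X + tr Y := by
  simp only [tr, add_a, add_d]; ring

/-- A matrix with unit determinant is a unit. -/
lemma isUnit_of_isUnit_dets {X : GenMatrix R s} (h : IsUnit (dets X)) : IsUnit X := by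
  obtain ⟨u, hu⟩ := h
  have hv : (↑u⁻¹ : R) * (X.a * X.d - s * (X.b * X.c)) = 1 := by
    rw [show X.a * X.d - s * (X.b * X.c) = dets X from rfl, ← hu]; exact u.inv_mul
  refine ⟨⟨X, ⟨↑u⁻¹ * X.d, -(↑u⁻¹ * X.b), -(↑u⁻¹ * X.c), ↑u⁻¹ * X.a⟩, ?_, ?_⟩, rfl⟩
  · ext
    · show X.a * (↑u⁻¹ * X.d) + s * (X.b * -(↑u⁻¹ * X.c)) = 1
      linear_combination hv
    · show X.a * -(↑u⁻¹ * X.b) + X.b * (↑u⁻¹ * X.a) = 0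
      ring
    · show X.c * (↑u⁻¹ * X.d) + X.d * -(↑u⁻¹ * X.c) = 0
      ring
    · show s * (X.c * -(↑u⁻¹ * X.b)) + X.d * (↑u⁻¹ * X.a) = 1
      linear_combination hv
  · ext
    · show (↑u⁻¹ * X.d) * X.a + s * (-(↑u⁻¹ * X.b) * X.c) = 1
      linear_combination hv
    · show (↑u⁻¹ * X.d) * X.b + -(↑u⁻¹ * X.b) * X.d = 0
      ring
    · show -(↑u⁻¹ * X.c) * X.a + (↑u⁻¹ * X.a) * X.c = 0
      ring
    · show s * (-(↑u⁻¹ * X.c) * X.b) + (↑u⁻¹ * X.a) * X.d = 1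
      linear_combination hv

lemma isUnit_dets_of_isUnit {X : GenMatrix R s} (h : IsUnit X) : IsUnit (dets X) := by
  obtain ⟨u, hu⟩ := h
  have h1 : dets (X * ((u⁻¹ : (GenMatrix R s)ˣ) : GenMatrix R s)) = 1 := by
    rw [← hu, u.mul_inv, dets_one]
  rw [dets_mul] at h1
  exact IsUnit.of_mul_eq_one _ h1

/-- Cayley–Hamilton for generalized 2×2 matrices. -/
lemma mul_self_eq (X : GenMatrix R s) :
    X * X + scalar (dets X) = scalar (tr X) * X := by
  ext <;> simp [dets, tr] <;> ring

/-- An idempotent unit equals 1 (in any ring). -/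
lemma idem_unit_eq_one {S : Type*} [Ring S] {p : S} (hp : p * p = p) (hu : IsUnit p) :
    p = 1 := by
  obtain ⟨u, hup⟩ := hu
  have h2 : (↑u⁻¹ : S) * (p * p) = ↑u⁻¹ * p := by rw [hp]
  rw [← hup, ← mul_assoc, u.inv_mul, one_mul] at h2
  rw [← hup, h2]

end GenMatrix

open GenMatrix IsLocalRing

variable {R : Type*} [CommRing R] [IsLocalRing R] {s : R}

lemma aux_isUnit_of_not_mem {x : R} (h : x ∉ maximalIdeal R) : IsUnit x := by
  by_contra h'; exact h ((mem_maximalIdeal x).mpr h')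

lemma aux_not_isUnit_of_mem {x : R} (h : x ∈ maximalIdeal R) : ¬ IsUnit x :=
  (mem_maximalIdeal x).mp h

lemma aux_isUnit_one_add_mem {j : R} (hj : j ∈ maximalIdeal R) : IsUnit (1 + j) := by
  by_contra h
  have h1 : (1 + j) ∈ maximalIdeal R := (mem_maximalIdeal _).mpr h
  have h2 : (1 : R) ∈ maximalIdeal R := by
    have := Ideal.sub_mem _ h1 hj; simpa using this
  exact (IsLocalRing.maximalIdeal.isMaximal R).ne_top
    (Ideal.eq_top_of_isUnit_mem _ h2 isUnit_one)

lemma aux_idem_zero_or_one {e : R} (he : e * e = e) : e = 0 ∨ e = 1 := by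
  by_cases h : IsUnit e
  · exact Or.inr (GenMatrix.idem_unit_eq_one he h)
  · left
    have hmem : e ∈ maximalIdeal R := (mem_maximalIdeal e).mpr h
    have hu : IsUnit (1 - e) := by
      have h3 : IsUnit (1 + (-e)) := aux_isUnit_one_add_mem (neg_mem hmem)
      simpa [sub_eq_add_neg] using h3
    obtain ⟨u, hu1⟩ := hu
    have h0 : (1 - e) * e = 0 := by linear_combination -he
    have h3 : (↑u⁻¹ : R) * ((1 - e) * e) = e := by
      rw [← mul_assoc, ← hu1, u.inv_mul, one_mul]
    rw [h0, mul_zero] at h3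
    exact h3.symm

/-- `1 + scalar x * B` is a unit when `x` lies in the maximal ideal. -/
lemma aux_isUnit_one_add_scalar_mul {x : R} (hx : x ∈ maximalIdeal R)
    (B : GenMatrix R s) : IsUnit (1 + scalar x * B) := by
  apply isUnit_of_isUnit_dets
  rw [dets_one_add, tr_scalar_mul]
  have h1 : dets (scalar x * B) = x * x * dets B := by rw [dets_mul, dets_scalar]
  rw [h1, add_assoc]
  exact aux_isUnit_one_add_mem (Ideal.add_mem _
    (Ideal.mul_mem_right _ _ hx) (Ideal.mul_mem_right _ _ (Ideal.mul_mem_right _ _ hx)))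

/-- A root of the characteristic polynomial lying in the maximal ideal yields a
quasipolar decomposition. -/
lemma aux_quasipolar_of_root (A : GenMatrix R s) (x : R)
    (hx : x ∈ maximalIdeal R) (ht : tr A ∉ maximalIdeal R)
    (hroot : x ^ 2 - tr A * x + dets A = 0) : IsQuasipolar A := by
  have hroot' : x ^ 2 - (A.a + A.d) * x + (A.a * A.d - s * (A.b * A.c)) = 0 := hroot
  set μ : R := tr A - x with hμdef
  have htxμ : A.a + A.d = x + μ := by rw [hμdef]; show A.a + A.d = x + (A.a + A.d - x); ring
  have hδ : A.a * A.d - s * (A.b * A.c) = x * μ := by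
    rw [hμdef]
    show A.a * A.d - s * (A.b * A.c) = x * (A.a + A.d - x)
    linear_combination hroot'
  have hμ : μ ∉ maximalIdeal R := by
    intro h
    apply ht
    have h4 := Ideal.add_mem _ h hx
    show A.a + A.d ∈ maximalIdeal R
    rwa [htxμ, add_comm x μ]
  have hxu : (x - μ) ∉ maximalIdeal R := by
    intro h
    exact hμ (by have h5 := Ideal.sub_mem _ hx h; simpa using h5)
  obtain ⟨w, hw⟩ := aux_isUnit_of_not_mem hxu
  have hwv : (↑w⁻¹ : R) * (x - μ) = 1 := by rw [← hw]; exact w.inv_mul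
  set v : R := (↑w⁻¹ : R) with hvdef
  set q : GenMatrix R s := A - scalar μ with hqdef
  set p : GenMatrix R s := scalar v * q with hpdef
  have hqa : q.a = A.a - μ := by rw [hqdef]; simp
  have hqb : q.b = A.b := by rw [hqdef]; simp
  have hqc : q.c = A.c := by rw [hqdef]; simp
  have hqd : q.d = A.d - μ := by rw [hqdef]; simp
  -- q * q = (x - μ) • q
  have hq : q * q = scalar (x - μ) * q := by
    ext
    · show q.a * q.a + s * (q.b * q.c) = (x - μ) * q.a + s * (0 * q.c)
      rw [hqa, hqb, hqc]
      linear_combination -hδ + A.a * htxμ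
    · show q.a * q.b + q.b * q.d = (x - μ) * q.b + 0 * q.d
      rw [hqa, hqb, hqd]
      linear_combination A.b * htxμ
    · show q.c * q.a + q.d * q.c = 0 * q.a + (x - μ) * q.c
      rw [hqa, hqc, hqd]
      linear_combination A.c * htxμ
    · show s * (q.c * q.b) + q.d * q.d = s * (0 * q.b) + (x - μ) * q.d
      rw [hqb, hqc, hqd]
      linear_combination -hδ + A.d * htxμ
  have hpp : p * p = p := by
    calc p * p = scalar (v * v) * (q * q) := by rw [hpdef, scalar_mul_scalar_mul]
      _ = scalar (v * v) * (scalar (x - μ) * q) := by rw [hq]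
      _ = (scalar (v * v) * scalar (x - μ)) * q := by rw [← mul_assoc]
      _ = scalar ((v * v) * (x - μ)) * q := by rw [scalar_mul_scalar]
      _ = scalar v * q := by
            rw [show (v * v) * (x - μ) = v * (v * (x - μ)) by ring, hwv, mul_one]
      _ = p := hpdef.symm
  -- A * q = x • q
  have hAq : A * q = scalar x * q := by
    ext
    · show A.a * q.a + s * (A.b * q.c) = x * q.a + s * (0 * q.c)
      rw [hqa, hqc]
      linear_combination A.a * htxμ - hδ
    · show A.a * q.b + A.b * q.d = x * q.b + 0 * q.d
      rw [hqb, hqd]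
      linear_combination A.b * htxμ
    · show A.c * q.a + A.d * q.c = 0 * q.a + x * q.c
      rw [hqa, hqc]
      linear_combination A.c * htxμ
    · show s * (A.c * q.b) + A.d * q.d = s * (0 * q.b) + x * q.d
      rw [hqb, hqd]
      linear_combination A.d * htxμ - hδ
  have hAp : A * p = scalar x * p := by
    calc A * p = (A * scalar v) * q := by rw [hpdef, mul_assoc]
      _ = (scalar v * A) * q := by rw [← scalar_comm]
      _ = scalar v * (A * q) := by rw [mul_assoc]
      _ = scalar v * (scalar x * q) := by rw [hAq]
      _ = (scalar v * scalar x) * q := by rw [mul_assoc]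
      _ = (scalar x * scalar v) * q := by rw [scalar_comm]
      _ = scalar x * p := by rw [hpdef, mul_assoc]
  refine ⟨p, hpp, ?_, ?_, ?_⟩
  · intro y hy
    have hqy : q * y = y * q := by
      rw [hqdef, sub_mul, mul_sub, hy, scalar_comm]
    calc p * y = scalar v * (q * y) := by rw [hpdef, mul_assoc]
      _ = scalar v * (y * q) := by rw [hqy]
      _ = (scalar v * y) * q := by rw [mul_assoc]
      _ = (y * scalar v) * q := by rw [scalar_comm]
      _ = y * p := by rw [hpdef, mul_assoc]
  · -- A + p is a unit
    apply isUnit_of_isUnit_dets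
    have hd : dets (A + p) = μ * (x + 1) := by
      show (A + p).a * (A + p).d - s * ((A + p).b * (A + p).c) = μ * (x + 1)
      have hpa : (A + p).a = A.a + v * (A.a - μ) + s * (0 * A.c) := by
        rw [hpdef]; show A.a + (v * q.a + s * (0 * q.c)) = _; rw [hqa, hqc]; ring
      have hpb : (A + p).b = A.b + v * A.b := by
        rw [hpdef]; show A.b + (v * q.b + 0 * q.d) = _; rw [hqb]; ring
      have hpc : (A + p).c = A.c + v * A.c := by
        rw [hpdef]; show A.c + (0 * q.a + v * q.c) = _; rw [hqc]; ring
      have hpd : (A + p).d = A.d + v * (A.d - μ) := by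
        rw [hpdef]; show A.d + (s * (0 * q.b) + v * q.d) = _; rw [hqd]; ring
      rw [hpa, hpb, hpc, hpd]
      linear_combination μ * hwv + ((1 + v) ^ 2) * hδ + (-(1 + v) * v * μ) * htxμ
    rw [hd]
    exact (aux_isUnit_of_not_mem hμ).mul (by rw [add_comm]; exact aux_isUnit_one_add_mem hx)
  · -- A * p is quasinilpotent
    intro Y _
    rw [hAp, mul_assoc]
    exact aux_isUnit_one_add_scalar_mul hx (p * Y)

end Aux

/-- over a commutative local ring `R`, `K_s(R)` is quasipolar iff for every
`A ∈ K_s(R)` with `det_s(A) ∈ J(R)`, either `tr(A) ∈ J(R)` or `x² - tr(A)x + det_s(A) = 0`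
is solvable in `R`. -/
theorem genMatrix_isQuasipolarRing_iff {R : Type*} [CommRing R] [IsLocalRing R] (s : R) :
    IsQuasipolarRing (GenMatrix R s) ↔
      ∀ A : GenMatrix R s, GenMatrix.dets A ∈ JacobsonRadical R →
        (GenMatrix.tr A ∈ JacobsonRadical R ∨
          ∃ x : R, x ^ 2 - GenMatrix.tr A * x + GenMatrix.dets A = 0) := by
  have hJR : JacobsonRadical R = IsLocalRing.maximalIdeal R :=
    IsLocalRing.jacobson_eq_maximalIdeal ⊥ bot_ne_top
  rw [hJR]
  constructor
  · -- quasipolar ⇒ condition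
    intro hqp A hdet
    by_cases htr : GenMatrix.tr A ∈ IsLocalRing.maximalIdeal R
    · exact Or.inl htr
    · right
      obtain ⟨p, hidem, hcomm, hunit, hqnil⟩ := hqp A
      have hpA : p * A = A * p := hcomm A rfl
      have hdpidem : GenMatrix.dets p * GenMatrix.dets p = GenMatrix.dets p := by
        rw [← GenMatrix.dets_mul, hidem.eq]
      rcases aux_idem_zero_or_one hdpidem with hdp0 | hdp1
      · -- dets p = 0
        have h1subidem : GenMatrix.dets (1 - p) * GenMatrix.dets (1 - p)
            = GenMatrix.dets (1 - p) := by
          rw [← GenMatrix.dets_mul, hidem.one_sub.eq]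
        rcases aux_idem_zero_or_one h1subidem with hq0 | hq1
        · -- dets (1-p) = 0, so tr p = 1 : extract a root
          have htrp : GenMatrix.tr p = 1 := by
            have h5 := hq0
            rw [GenMatrix.dets_one_sub, hdp0] at h5
            linear_combination -h5
          have hdB : GenMatrix.dets (A * p) = 0 := by
            rw [GenMatrix.dets_mul, hdp0, mul_zero]
          have hB2 : (A * p) * (A * p) = GenMatrix.scalar (GenMatrix.tr (A * p)) * (A * p) := by
            have h6 := GenMatrix.mul_self_eq (A * p)
            rw [hdB, show (GenMatrix.scalar (0 : R) : GenMatrix R s) = 0 by ext <;> simp,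
              add_zero] at h6
            exact h6
          have hassoc : (A * p) * (A * p) = (A * A) * p := by
            calc (A * p) * (A * p) = A * ((p * A) * p) := by rw [mul_assoc, ← mul_assoc p A p]
              _ = A * ((A * p) * p) := by rw [hpA]
              _ = A * (A * (p * p)) := by rw [mul_assoc]
              _ = A * (A * p) := by rw [hidem.eq]
              _ = (A * A) * p := by rw [← mul_assoc]
          have hkey : GenMatrix.scalar (GenMatrix.tr (A * p)) * (A * p)
              + GenMatrix.scalar (GenMatrix.dets A) * p
              = GenMatrix.scalar (GenMatrix.tr A) * (A * p) := by
            calc GenMatrix.scalar (GenMatrix.tr (A * p)) * (A * p)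
                  + GenMatrix.scalar (GenMatrix.dets A) * p
                = (A * A) * p + GenMatrix.scalar (GenMatrix.dets A) * p := by
                  rw [← hB2, hassoc]
              _ = (A * A + GenMatrix.scalar (GenMatrix.dets A)) * p := by rw [add_mul]
              _ = (GenMatrix.scalar (GenMatrix.tr A) * A) * p := by
                  rw [GenMatrix.mul_self_eq]
              _ = GenMatrix.scalar (GenMatrix.tr A) * (A * p) := by rw [mul_assoc]
          have htreq := congrArg GenMatrix.tr hkey
          rw [GenMatrix.tr_add, GenMatrix.tr_scalar_mul, GenMatrix.tr_scalar_mul,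
            GenMatrix.tr_scalar_mul, htrp, mul_one] at htreq
          exact ⟨GenMatrix.tr (A * p), by linear_combination htreq⟩
        · -- dets (1-p) = 1, so p = 0, so A is a unit: contradiction
          have hpunit : IsUnit ((1 : GenMatrix R s) - p) :=
            GenMatrix.isUnit_of_isUnit_dets (by rw [hq1]; exact isUnit_one)
          have hp0 : p = 0 := by
            have h7 : (1 : GenMatrix R s) - p = 1 :=
              GenMatrix.idem_unit_eq_one hidem.one_sub.eq hpunit
            rwa [sub_eq_self] at h7
          rw [hp0, add_zero] at hunit
          exact absurd (GenMatrix.isUnit_dets_of_isUnit hunit) (aux_not_isUnit_of_mem hdet)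
      · -- dets p = 1, so p = 1, so A is quasinilpotent: contradiction
        have hp1 : p = 1 :=
          GenMatrix.idem_unit_eq_one hidem.eq
            (GenMatrix.isUnit_of_isUnit_dets (by rw [hdp1]; exact isUnit_one))
        rw [hp1, mul_one] at hqnil
        obtain ⟨u, hu⟩ := aux_isUnit_of_not_mem htr
        have hv : GenMatrix.tr A * (↑u⁻¹ : R) = 1 := by rw [← hu]; exact u.mul_inv
        have hcom : A * GenMatrix.scalar (-(↑u⁻¹ : R))
            = GenMatrix.scalar (-(↑u⁻¹ : R)) * A := (GenMatrix.scalar_comm _ A).symm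
        have hun := hqnil (GenMatrix.scalar (-(↑u⁻¹ : R))) hcom
        have hd : GenMatrix.dets (1 + A * GenMatrix.scalar (-(↑u⁻¹ : R)))
            = (↑u⁻¹ : R) * ((↑u⁻¹ : R) * GenMatrix.dets A) := by
          rw [GenMatrix.dets_one_add, ← GenMatrix.scalar_comm, GenMatrix.tr_scalar_mul,
            GenMatrix.dets_mul, GenMatrix.dets_scalar]
          linear_combination -hv
        have h8 := GenMatrix.isUnit_dets_of_isUnit hun
        rw [hd] at h8
        exact absurd h8 (aux_not_isUnit_of_mem
          (Ideal.mul_mem_left _ _ (Ideal.mul_mem_left _ _ hdet)))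
  · -- condition ⇒ quasipolar
    intro hyp A
    by_cases hdet : GenMatrix.dets A ∈ IsLocalRing.maximalIdeal R
    · by_cases htr : GenMatrix.tr A ∈ IsLocalRing.maximalIdeal R
      · -- tr, dets ∈ J: take p = 1
        refine ⟨1, mul_one 1, fun y _ => by rw [one_mul, mul_one], ?_, ?_⟩
        · apply GenMatrix.isUnit_of_isUnit_dets
          rw [add_comm A 1, GenMatrix.dets_one_add, add_assoc]
          exact aux_isUnit_one_add_mem (Ideal.add_mem _ htr hdet)
        · rw [mul_one]
          intro X hX
          have h1 : A.a * X.a + s * (A.b * X.c) = X.a * A.a + s * (X.b * A.c) :=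
            congrArg GenMatrix.a hX
          have h2 : A.a * X.b + A.b * X.d = X.a * A.b + X.b * A.d :=
            congrArg GenMatrix.b hX
          have h3 : A.c * X.a + A.d * X.c = X.c * A.a + X.d * A.c :=
            congrArg GenMatrix.c hX
          have he1 : s * (A.b * X.c) = s * (A.c * X.b) := by linear_combination h1
          have he2 : A.b * (X.a - X.d) = (A.a - A.d) * X.b := by linear_combination -h2
          have he3 : A.c * (X.a - X.d) = (A.a - A.d) * X.c := by linear_combination h3
          have htr' : A.a + A.d ∈ IsLocalRing.maximalIdeal R := htr
          have hdet' : A.a * A.d - s * (A.b * A.c) ∈ IsLocalRing.maximalIdeal R := hdet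
          have hWval : GenMatrix.tr (A * X)
              = A.a * X.a + s * (A.b * X.c) + (s * (A.c * X.b) + A.d * X.d) := rfl
          have hsq : GenMatrix.tr (A * X) * GenMatrix.tr (A * X)
              = (A.a + A.d) *
                  (A.a * (X.a - X.d) ^ 2 - s * (A.a + A.d) * (X.b * X.c)
                    + 4 * s * A.a * (X.b * X.c)
                    + 2 * (A.a * (X.a - X.d) + s * (A.b * X.c) + s * (A.c * X.b)) * X.d
                    + (A.a + A.d) * X.d ^ 2)
                + (A.a * A.d - s * (A.b * A.c)) * (-((X.a - X.d) ^ 2 + 4 * s * (X.b * X.c))) := by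
            rw [hWval]
            linear_combination (s * (A.b * X.c) - s * (A.c * X.b)) * he1
              + (s * (A.a + A.d) * X.c - s * (A.c * (X.a - X.d) - (A.a - A.d) * X.c)) * he2
              + (s * (A.a + A.d) * X.b) * he3
          have hWmem : GenMatrix.tr (A * X) ∈ IsLocalRing.maximalIdeal R := by
            refine (IsLocalRing.maximalIdeal.isMaximal R).isPrime.mem_of_pow_mem 2 ?_
            rw [pow_two, hsq]
            exact Ideal.add_mem _ (Ideal.mul_mem_right _ _ htr')
              (Ideal.mul_mem_right _ _ hdet')
          apply GenMatrix.isUnit_of_isUnit_dets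
          rw [GenMatrix.dets_one_add, GenMatrix.dets_mul, add_assoc]
          exact aux_isUnit_one_add_mem
            (Ideal.add_mem _ hWmem (Ideal.mul_mem_right _ _ hdet))
      · -- tr ∉ J: use a root of the characteristic polynomial
        rcases hyp A hdet with h | ⟨x, hx⟩
        · exact absurd h htr
        · have hxy : x * (GenMatrix.tr A - x) = GenMatrix.dets A := by linear_combination -hx
          have hmem : x * (GenMatrix.tr A - x) ∈ IsLocalRing.maximalIdeal R := by
            rw [hxy]; exact hdet
          rcases (IsLocalRing.maximalIdeal.isMaximal R).isPrime.mem_or_mem hmem with hmx | hmy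
          · exact aux_quasipolar_of_root A x hmx htr hx
          · exact aux_quasipolar_of_root A (GenMatrix.tr A - x) hmy htr (by linear_combination hx)
    · -- dets A a unit: A is a unit, take p = 0
      refine ⟨0, mul_zero 0, fun y _ => by rw [zero_mul, mul_zero], ?_, ?_⟩
      · rw [add_zero]
        exact GenMatrix.isUnit_of_isUnit_dets (aux_isUnit_of_not_mem hdet)
      · rw [mul_zero]
        intro Y _
        rw [zero_mul, add_zero]
        exact isUnit_one
end
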